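/- In the standardized linear collider model with Var(A)=Var(Y)=Var(W)=1, the selection bias β_{ya.w} − β_{ya} equals ε·(α²η + α³ε − η − αε)/(1 − (η + αε)²); in particular, the selection bias vanishes when ε = 0. -/

import Mathlib

open MeasureTheory

/-- Covariance of two real random variables. -/
noncomputable def cov' {Ω : Type*} [MeasurableSpace Ω] (μ : Measure Ω) (X Y : Ω → ℝ) : ℝ :=
  ∫ ω, (X ω - ∫ x, X x ∂μ) * (Y ω - ∫ x, Y x ∂μ) ∂μ

/-- Variance of a real random variable. -/
noncomputable def var' {Ω : Type*} [MeasurableSpace Ω] (μ : Measure Ω) (X : Ω → ℝ) : ℝ :=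
  cov' μ X X

open ProbabilityTheory

private lemma int_mul' {Ω : Type*} [MeasurableSpace Ω] {μ : Measure Ω} {f g : Ω → ℝ}
    (hf : MemLp f 2 μ) (hg : MemLp g 2 μ) :
    Integrable (fun ω => f ω * g ω) μ := by
  have hb : Integrable (fun ω => (1:ℝ)/2 * (f ω ^ 2 + g ω ^ 2)) μ :=
    (hf.integrable_sq.add hg.integrable_sq).const_mul ((1:ℝ)/2)
  refine hb.mono' (hf.1.mul hg.1) ?_
  filter_upwards with ω
  have h2 : (2:ℝ) * |f ω * g ω| ≤ f ω ^ 2 + g ω ^ 2 := by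
    rcases abs_cases (f ω * g ω) with ⟨h, _⟩ | ⟨h, _⟩ <;>
      nlinarith [sq_nonneg (f ω - g ω), sq_nonneg (f ω + g ω)]
  simp only [Real.norm_eq_abs]
  linarith

/-- Standardized linear collider model: selection bias equals
`ε(α²η + α³ε − η − αε)/(1 − (η + αε)²)`; in particular it vanishes when `ε = 0`. -/
theorem stmt13 {Ω : Type*} [MeasurableSpace Ω] (μ : Measure Ω) [IsProbabilityMeasure μ]
    (Ua Uy Uw A Y W : Ω → ℝ) (α η ε : ℝ)
    (hUam : Measurable Ua) (hUym : Measurable Uy) (hUwm : Measurable Uw)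
    (hind : iIndepFun ![Ua, Uy, Uw] μ)
    (hUa2 : MemLp Ua 2 μ) (hUy2 : MemLp Uy 2 μ) (hUw2 : MemLp Uw 2 μ)
    (hma : ∫ ω, Ua ω ∂μ = 0) (hmy : ∫ ω, Uy ω ∂μ = 0) (hmw : ∫ ω, Uw ω ∂μ = 0)
    (hvA : var' μ A = 1) (hvY : var' μ Y = 1) (hvW : var' μ W = 1)
    (hA : ∀ ω, A ω = Ua ω)
    (hY : ∀ ω, Y ω = α * A ω + Uy ω)
    (hW : ∀ ω, W ω = η * A ω + ε * Y ω + Uw ω)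
    (hden : (η + α * ε)^2 < 1) :
    (cov' μ Y A - cov' μ Y W * cov' μ W A) / (1 - (cov' μ W A)^2) - cov' μ Y A =
      ε * (α^2 * η + α^3 * ε - η - α * ε) / (1 - (η + α * ε)^2) ∧
    (ε = 0 →
      (cov' μ Y A - cov' μ Y W * cov' μ W A) / (1 - (cov' μ W A)^2) - cov' μ Y A = 0) := by
  -- basic integrability
  have iUa : Integrable Ua μ := hUa2.integrable one_le_two
  have iUy : Integrable Uy μ := hUy2.integrable one_le_two
  have iUw : Integrable Uw μ := hUw2.integrable one_le_two
  have maa : Integrable (fun ω => Ua ω * Ua ω) μ := int_mul' hUa2 hUa2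
  have may : Integrable (fun ω => Ua ω * Uy ω) μ := int_mul' hUa2 hUy2
  have maw : Integrable (fun ω => Ua ω * Uw ω) μ := int_mul' hUa2 hUw2
  have myy : Integrable (fun ω => Uy ω * Uy ω) μ := int_mul' hUy2 hUy2
  have myw : Integrable (fun ω => Uy ω * Uw ω) μ := int_mul' hUy2 hUw2
  have mww : Integrable (fun ω => Uw ω * Uw ω) μ := int_mul' hUw2 hUw2
  -- cross moments vanish by independence
  have i01 : IndepFun Ua Uy μ := by
    simpa using hind.indepFun (show (0 : Fin 3) ≠ 1 by decide)
  have i02 : IndepFun Ua Uw μ := by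
    simpa using hind.indepFun (show (0 : Fin 3) ≠ 2 by decide)
  have i12 : IndepFun Uy Uw μ := by
    simpa using hind.indepFun (show (1 : Fin 3) ≠ 2 by decide)
  have e01 : ∫ ω, Ua ω * Uy ω ∂μ = 0 := by
    rw [show (∫ ω, Ua ω * Uy ω ∂μ) = integral μ (Ua * Uy) from rfl,
      i01.integral_mul_eq_mul_integral iUa.aestronglyMeasurable iUy.aestronglyMeasurable, hma, zero_mul]
  have e02 : ∫ ω, Ua ω * Uw ω ∂μ = 0 := by
    rw [show (∫ ω, Ua ω * Uw ω ∂μ) = integral μ (Ua * Uw) from rfl,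
      i02.integral_mul_eq_mul_integral iUa.aestronglyMeasurable iUw.aestronglyMeasurable, hma, zero_mul]
  have e12 : ∫ ω, Uy ω * Uw ω ∂μ = 0 := by
    rw [show (∫ ω, Uy ω * Uw ω ∂μ) = integral μ (Uy * Uw) from rfl,
      i12.integral_mul_eq_mul_integral iUy.aestronglyMeasurable iUw.aestronglyMeasurable, hmy, zero_mul]
  have e10 : ∫ ω, Uy ω * Ua ω ∂μ = 0 := by simp_rw [mul_comm]; exact e01
  have e20 : ∫ ω, Uw ω * Ua ω ∂μ = 0 := by simp_rw [mul_comm]; exact e02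
  have mya : Integrable (fun ω => Uy ω * Ua ω) μ := int_mul' hUy2 hUa2
  have mwa : Integrable (fun ω => Uw ω * Ua ω) μ := int_mul' hUw2 hUa2
  -- means of A, Y, W are zero
  have hAf : A = Ua := funext hA
  have hYf : Y = fun ω => α * Ua ω + Uy ω := funext fun ω => by rw [hY, hA]
  have mA : ∫ ω, A ω ∂μ = 0 := by rw [hAf]; exact hma
  have mY : ∫ ω, Y ω ∂μ = 0 := by
    rw [hYf, integral_add (iUa.const_mul α) iUy, integral_const_mul, hma, hmy]; ring
  have mW : ∫ ω, W ω ∂μ = 0 := by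
    have h : ∀ ω, W ω = η * Ua ω + (ε * Y ω + Uw ω) := fun ω => by
      rw [hW, hA]; ring
    have iY : Integrable Y μ := by
      rw [hYf]; exact (iUa.const_mul α).add iUy
    simp_rw [h]
    have i2 : Integrable (fun ω => ε * Y ω + Uw ω) μ := (iY.const_mul ε).add iUw
    rw [integral_add (iUa.const_mul η) i2,
      integral_add (iY.const_mul ε) iUw,
      integral_const_mul, integral_const_mul, hma, mY, hmw]; ring
  -- second moment of Ua from Var(A)=1
  have eaa : ∫ ω, Ua ω * Ua ω ∂μ = 1 := by
    have h : var' μ A = ∫ ω, Ua ω * Ua ω ∂μ := by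
      unfold var' cov'; rw [mA, hAf]; simp
    rw [← h, hvA]
  -- Cov(Y,A) = α
  have cYA : cov' μ Y A = α := by
    unfold cov'
    rw [mY, mA, hAf]
    simp only [sub_zero]
    have h : ∀ ω, Y ω * Ua ω = α * (Ua ω * Ua ω) + Uy ω * Ua ω := by
      intro ω; rw [hY ω, hA ω]; ring
    simp_rw [h]
    rw [integral_add (maa.const_mul α) mya, integral_const_mul, eaa, e10]; ring
  -- Var(Y) = 1 gives ∫ Y² = 1
  have eYY : ∫ ω, Y ω * Y ω ∂μ = 1 := by
    have h : var' μ Y = ∫ ω, Y ω * Y ω ∂μ := by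
      unfold var' cov'; rw [mY]; simp
    rw [← h, hvY]
  -- useful integrabilities
  have iYUa : Integrable (fun ω => Y ω * Ua ω) μ := by
    have h : ∀ ω, Y ω * Ua ω = α * (Ua ω * Ua ω) + Uy ω * Ua ω := by
      intro ω; rw [hY ω, hA ω]; ring
    simp_rw [h]; exact (maa.const_mul _).add mya
  have iYY : Integrable (fun ω => Y ω * Y ω) μ := by
    have h : ∀ ω, Y ω * Y ω = α * α * (Ua ω * Ua ω) + (2 * α * (Ua ω * Uy ω) + Uy ω * Uy ω) := by
      intro ω; rw [hY ω, hA ω]; ring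
    simp_rw [h]; exact (maa.const_mul _).add ((may.const_mul _).add myy)
  have iYUw : Integrable (fun ω => Y ω * Uw ω) μ := by
    have h : ∀ ω, Y ω * Uw ω = α * (Ua ω * Uw ω) + Uy ω * Uw ω := by
      intro ω; rw [hY ω, hA ω]; ring
    simp_rw [h]; exact (maw.const_mul _).add myw
  have eYUa : ∫ ω, Y ω * Ua ω ∂μ = α := by
    have h : ∀ ω, Y ω * Ua ω = α * (Ua ω * Ua ω) + Uy ω * Ua ω := by
      intro ω; rw [hY ω, hA ω]; ring
    simp_rw [h]
    rw [integral_add (maa.const_mul _) mya, integral_const_mul, eaa, e10]; ring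
  have eYUw : ∫ ω, Y ω * Uw ω ∂μ = 0 := by
    have h : ∀ ω, Y ω * Uw ω = α * (Ua ω * Uw ω) + Uy ω * Uw ω := by
      intro ω; rw [hY ω, hA ω]; ring
    simp_rw [h]
    rw [integral_add (maw.const_mul _) myw, integral_const_mul, e02, e12]; ring
  -- Cov(W,A) = η + α ε
  have cWA : cov' μ W A = η + α * ε := by
    unfold cov'
    rw [mW, mA, hAf]
    simp only [sub_zero]
    have h : ∀ ω, W ω * Ua ω = η * (Ua ω * Ua ω) + (ε * (Y ω * Ua ω) + Uw ω * Ua ω) := by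
      intro ω; rw [hW ω, hA ω]; ring
    simp_rw [h]
    have i2 : Integrable (fun ω => ε * (Y ω * Ua ω) + Uw ω * Ua ω) μ :=
      (iYUa.const_mul ε).add mwa
    rw [integral_add (maa.const_mul η) i2,
      integral_add (iYUa.const_mul ε) mwa,
      integral_const_mul, integral_const_mul, eaa, eYUa, e20]; ring
  -- Cov(Y,W) = η α + ε
  have cYW : cov' μ Y W = η * α + ε := by
    unfold cov'
    rw [mY, mW]
    simp only [sub_zero]
    have h : ∀ ω, Y ω * W ω = η * (Y ω * Ua ω) + (ε * (Y ω * Y ω) + Y ω * Uw ω) := by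
      intro ω; rw [hW ω, hA ω]; ring
    simp_rw [h]
    have i2 : Integrable (fun ω => ε * (Y ω * Y ω) + Y ω * Uw ω) μ :=
      (iYY.const_mul ε).add iYUw
    rw [integral_add (iYUa.const_mul η) i2,
      integral_add (iYY.const_mul ε) iYUw,
      integral_const_mul, integral_const_mul, eYUa, eYY, eYUw]; ring
  -- finish with algebra
  have hd : 1 - (η + α * ε)^2 ≠ 0 := by nlinarith
  have key : (cov' μ Y A - cov' μ Y W * cov' μ W A) / (1 - (cov' μ W A)^2) - cov' μ Y A =
      ε * (α^2 * η + α^3 * ε - η - α * ε) / (1 - (η + α * ε)^2) := by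
    rw [cYA, cWA, cYW]
    field_simp
    ring
  exact ⟨key, fun hε => by rw [key, hε]; simp⟩
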